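/- Let \u03b1\u2081, \u2026, \u03b1\u2088 \u2208 \u2102 be the roots, counted with multiplicity, of h = X\u2078 + 2X\u2077 + 2X\u2076 \u2212 4X\u2074 + 8X\u00b2 + 16X + 16. Then \u220f_{i=1}^{8} (X \u2212 \u03b1\u1d62\u2074) = (X\u2074 \u2212 4X\u00b3 + 16X\u00b2 \u2212 64X + 256)\u00b2 in \u2102[X], and the polynomial X\u2074 \u2212 4X\u00b3 + 16X\u00b2 \u2212 64X + 256 is irreducible in \u211a[X]. -/

import Mathlib

open Polynomial

/-- The Weil 2-polynomial `h = X⁸ + 2X⁷ + 2X⁶ − 4X⁴ + 8X² + 16X + 16`, over `ℂ`. -/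
noncomputable def weilH : Polynomial ℂ :=
  X ^ 8 + 2 * X ^ 7 + 2 * X ^ 6 - 4 * X ^ 4 + 8 * X ^ 2 + 16 * X + 16

/-- Cancellation for composition with `X ^ 2` over `ℂ`. -/
lemma compXsq_cancel {p q : Polynomial ℂ} (h : p.comp (X ^ 2) = q.comp (X ^ 2)) : p = q := by
  have h0 : (p - q).comp (X ^ 2) = 0 := by rw [sub_comp, h, sub_self]
  rcases Polynomial.comp_eq_zero_iff.mp h0 with h1 | ⟨_, h2⟩
  · exact sub_eq_zero.mp h1
  · exfalso
    have := congrArg natDegree h2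
    simp at this

lemma auxA (s : Multiset ℂ) :
    ((s.map (fun α => X - C (α ^ 2))).prod).comp (X ^ 2) =
      (s.map (fun α => (X - C α) * (X + C α))).prod := by
  induction s using Multiset.induction_on with
  | empty => simp
  | cons a s ih =>
      simp only [Multiset.map_cons, Multiset.prod_cons, mul_comp, ih]
      congr 1
      simp only [sub_comp, X_comp, C_comp, map_pow, pow_comp]
      ring

lemma auxB (s : Multiset ℂ) :
    ((s.map (fun α => X - C α)).prod).comp (-X) =
      (s.map (fun α => -(X + C α))).prod := by
  induction s using Multiset.induction_on with
  | empty => simp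
  | cons a s ih =>
      simp only [Multiset.map_cons, Multiset.prod_cons, mul_comp, ih]
      congr 1
      simp only [sub_comp, X_comp, C_comp, neg_comp]
      ring

/-- Composing a product of `X - C α` with `X ^ 2` factors as the prescribed product. -/
lemma key (s : Multiset ℂ) (hev : Even (Multiset.card s)) :
    ((s.map (fun α => X - C (α ^ 2))).prod).comp (X ^ 2) =
      ((s.map (fun α => X - C α)).prod) * ((s.map (fun α => X - C α)).prod).comp (-X) := by
  have hC : (s.map (fun α => -(X + C α))).prod =
      (-1) ^ Multiset.card s * (s.map (fun α => X + C α)).prod := by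
    have h : (s.map (fun α => -(X + C α))) = (s.map (fun α => X + C α)).map Neg.neg := by
      rw [Multiset.map_map]; rfl
    rw [h, Multiset.prod_map_neg, Multiset.card_map]
  rw [auxA, auxB, hC, hev.neg_one_pow, one_mul, ← Multiset.prod_map_mul]

lemma weilH_monic : weilH.Monic := by
  unfold weilH; monicity!

lemma weilH_natDegree : weilH.natDegree = 8 := by
  unfold weilH; compute_degree!

lemma weilH_card_roots : Multiset.card weilH.roots = 8 := by
  rw [Polynomial.splits_iff_card_roots.mp (IsAlgClosed.splits weilH), weilH_natDegree]

lemma weilH_prod_roots : (weilH.roots.map (fun α => X - C α)).prod = weilH :=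
  ((IsAlgClosed.splits weilH).eq_prod_roots_of_monic
    weilH_monic).symm

/-- Step 1: the product of `X - C (α²)` over roots of `weilH`. -/
lemma step1 : (weilH.roots.map (fun α => X - C (α ^ 2))).prod =
    (X ^ 8 - 4 * X ^ 6 + 16 * X ^ 4 - 64 * X ^ 2 + 256 : Polynomial ℂ) := by
  apply compXsq_cancel
  rw [key _ (by rw [weilH_card_roots]; decide), weilH_prod_roots]
  unfold weilH
  simp only [add_comp, sub_comp, mul_comp, pow_comp, X_comp, ofNat_comp, neg_comp]
  push_cast
  ring

/-- Step 2: the product of `X - C (α⁴)` over roots of `weilH`. -/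
lemma step2 : (weilH.roots.map (fun α => X - C (α ^ 4))).prod =
    (X ^ 4 - 4 * X ^ 3 + 16 * X ^ 2 - 64 * X + 256 : Polynomial ℂ) ^ 2 := by
  set s2 : Multiset ℂ := weilH.roots.map (fun α => α ^ 2) with hs2
  have hmap : weilH.roots.map (fun α => X - C (α ^ 4)) =
      s2.map (fun β => X - C (β ^ 2)) := by
    rw [hs2, Multiset.map_map]
    apply Multiset.map_congr rfl
    intro a _
    simp [← pow_mul]
  have hprod : (s2.map (fun β => X - C β)).prod =
      (X ^ 8 - 4 * X ^ 6 + 16 * X ^ 4 - 64 * X ^ 2 + 256 : Polynomial ℂ) := by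
    rw [hs2, Multiset.map_map]
    exact step1
  rw [hmap]
  apply compXsq_cancel
  have hcard : Even (Multiset.card s2) := by
    rw [hs2, Multiset.card_map, weilH_card_roots]; decide
  rw [key _ hcard, hprod]
  simp only [add_comp, sub_comp, mul_comp, pow_comp, X_comp, ofNat_comp, neg_comp]
  push_cast
  ring

/-- The scaling algebra automorphism `X ↦ -4X` of `ℚ[X]`. -/
noncomputable def scaleNeg4 : Polynomial ℚ ≃ₐ[ℚ] Polynomial ℚ :=
  AlgEquiv.ofAlgHom (aeval (C (-4 : ℚ) * X)) (aeval (C (-4 : ℚ)⁻¹ * X))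
    (by
      ext : 1
      simp only [AlgHom.coe_comp, Function.comp_apply, map_mul, aeval_X, aeval_C,
        algebraMap_eq, AlgHom.coe_id, id_eq]
      rw [← mul_assoc, ← C_mul]
      norm_num)
    (by
      ext : 1
      simp only [AlgHom.coe_comp, Function.comp_apply, map_mul, aeval_X, aeval_C,
        algebraMap_eq, AlgHom.coe_id, id_eq]
      rw [← mul_assoc, ← C_mul]
      norm_num)

lemma irred_q : Irreducible (X ^ 4 - 4 * X ^ 3 + 16 * X ^ 2 - 64 * X + 256 : Polynomial ℚ) := by
  haveI : Fact (Nat.Prime 5) := ⟨by norm_num⟩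
  rw [← MulEquiv.irreducible_iff scaleNeg4.toMulEquiv]
  have h5 : Irreducible (cyclotomic 5 ℚ) := cyclotomic.irreducible_rat (by norm_num)
  have hcyc : (cyclotomic 5 ℚ) = X ^ 4 + X ^ 3 + X ^ 2 + X + 1 := by
    rw [cyclotomic_prime]
    simp [Finset.sum_range_succ]
    ring
  have c4 : (C (4 : ℚ)) = (4 : Polynomial ℚ) := map_ofNat C 4
  have c256 : (C (256 : ℚ)) = (256 : Polynomial ℚ) := map_ofNat C 256
  have cm4 : (C (-4 : ℚ)) = (-4 : Polynomial ℚ) := by rw [show (-4 : ℚ) = -(4 : ℚ) by norm_num,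
    map_neg, c4]
  have heq : scaleNeg4.toMulEquiv (X ^ 4 - 4 * X ^ 3 + 16 * X ^ 2 - 64 * X + 256 : Polynomial ℚ)
      = C 256 * (cyclotomic 5 ℚ) := by
    show (aeval (C (-4 : ℚ) * X)) (X ^ 4 - 4 * X ^ 3 + 16 * X ^ 2 - 64 * X + 256 : Polynomial ℚ)
      = C 256 * (cyclotomic 5 ℚ)
    rw [hcyc]
    simp only [map_add, map_sub, map_mul, map_pow, aeval_X, map_ofNat, cm4, c256]
    ring
  rw [heq]
  have hu : IsUnit (C (256 : ℚ)) := Polynomial.isUnit_C.mpr (by norm_num)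
  have hassoc : Associated (cyclotomic 5 ℚ) (C 256 * cyclotomic 5 ℚ) :=
    ⟨hu.unit, by rw [hu.unit_spec]; ring⟩
  exact hassoc.irreducible h5

theorem stmt4 :
    (weilH.roots.map (fun α => X - C (α ^ 4))).prod =
      (X ^ 4 - 4 * X ^ 3 + 16 * X ^ 2 - 64 * X + 256 : Polynomial ℂ) ^ 2 ∧
    Irreducible (X ^ 4 - 4 * X ^ 3 + 16 * X ^ 2 - 64 * X + 256 : Polynomial ℚ) := by
  exact ⟨step2, irred_q⟩
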